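/- Let p ∈ [1,2] and w ≥ 0. The scalar thresholding function S_{w,p} : ℝ → ℝ satisfies, for all x ∈ ℝ, |S_{w,p}(x) − x| ≤ (wp/2)·|x|^{p−1}. -/
import Mathlib


noncomputable def scalarF (w p : ℝ) (x : ℝ) : ℝ :=
  x + w * p / 2 * (Real.sign x * |x| ^ (p - 1))

noncomputable def scalarS (w p : ℝ) : ℝ → ℝ :=
  if p = 1 then
    fun x => if w / 2 ≤ x then x - w / 2 else if x ≤ -(w / 2) then x + w / 2 else 0
  else Function.invFun (scalarF w p)

section aux

variable {p : ℝ}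

/-- The signed power function. -/
noncomputable def sgnPow (p : ℝ) (x : ℝ) : ℝ := Real.sign x * |x| ^ (p - 1)

lemma sgnPow_of_nonneg (hp : 1 < p) {x : ℝ} (hx : 0 ≤ x) :
    sgnPow p x = x ^ (p - 1) := by
  rcases eq_or_lt_of_le hx with h | h
  · simp [sgnPow, ← h, Real.zero_rpow (by linarith : p - 1 ≠ 0)]
  · rw [sgnPow, Real.sign_of_pos h, abs_of_pos h, one_mul]

lemma sgnPow_of_neg (hp : 1 < p) {x : ℝ} (hx : x < 0) :
    sgnPow p x = -((-x) ^ (p - 1)) := by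
  rw [sgnPow, Real.sign_of_neg hx, abs_of_neg hx, neg_one_mul]

lemma sgnPow_mono (hp : 1 < p) : Monotone (sgnPow p) := by
  intro a b hab
  rcases le_or_gt 0 a with ha | ha
  · rw [sgnPow_of_nonneg hp ha, sgnPow_of_nonneg hp (ha.trans hab)]
    exact Real.rpow_le_rpow ha hab (by linarith)
  · rcases le_or_gt 0 b with hb | hb
    · rw [sgnPow_of_neg hp ha, sgnPow_of_nonneg hp hb]
      have h1 : (0:ℝ) ≤ (-a) ^ (p - 1) := Real.rpow_nonneg (by linarith) _
      have h2 : (0:ℝ) ≤ b ^ (p - 1) := Real.rpow_nonneg hb _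
      linarith
    · rw [sgnPow_of_neg hp ha, sgnPow_of_neg hp hb]
      have := Real.rpow_le_rpow (by linarith : (0:ℝ) ≤ -b) (by linarith : -b ≤ -a)
        (by linarith : (0:ℝ) ≤ p - 1)
      linarith

lemma abs_sgnPow_le (x : ℝ) : |sgnPow p x| ≤ |x| ^ (p - 1) := by
  rw [sgnPow, abs_mul, abs_of_nonneg (Real.rpow_nonneg (abs_nonneg x) _)]
  calc |Real.sign x| * |x| ^ (p - 1) ≤ 1 * |x| ^ (p - 1) := by
        apply mul_le_mul_of_nonneg_right _ (Real.rpow_nonneg (abs_nonneg x) _)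
        rcases lt_trichotomy x 0 with h | h | h
        · simp [Real.sign_of_neg h]
        · simp [h]
        · simp [Real.sign_of_pos h]
    _ = |x| ^ (p - 1) := one_mul _

lemma sgnPow_continuous (hp : 1 < p) : Continuous (sgnPow p) := by
  rw [continuous_iff_continuousAt]
  intro a
  rcases lt_trichotomy a 0 with ha | ha | ha
  · have hev : ∀ᶠ x in nhds a, (fun x => -((-x) ^ (p - 1))) x = sgnPow p x := by
      filter_upwards [eventually_lt_nhds ha] with x hx
      exact (sgnPow_of_neg hp hx).symm
    refine ContinuousAt.congr ?_ hev
    exact (((Real.continuousAt_rpow_const (-a) (p - 1)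
      (Or.inl (by simpa using ha.ne))).comp continuousAt_neg).neg)
  · subst ha
    have h0 : sgnPow p 0 = 0 := by
      simp [sgnPow, Real.zero_rpow (by linarith : p - 1 ≠ 0)]
    rw [ContinuousAt, h0]
    apply squeeze_zero_norm (fun x => abs_sgnPow_le x)
    have hc : ContinuousAt (fun x : ℝ => |x| ^ (p - 1)) 0 :=
      (Real.continuousAt_rpow_const (|0|) (p - 1)
        (Or.inr (by linarith))).comp continuous_abs.continuousAt
    have := hc.tendsto
    simpa [Real.zero_rpow (by linarith : p - 1 ≠ 0)] using this
  · have hev : ∀ᶠ x in nhds a, (fun x => x ^ (p - 1)) x = sgnPow p x := by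
      filter_upwards [eventually_gt_nhds ha] with x hx
      exact (sgnPow_of_nonneg hp hx.le).symm
    refine ContinuousAt.congr ?_ hev
    exact Real.continuousAt_rpow_const a (p - 1) (Or.inl ha.ne')

lemma scalarF_surjective (hp : 1 < p) {w : ℝ} (hw : 0 ≤ w) :
    Function.Surjective (scalarF w p) := by
  have hc : (0:ℝ) ≤ w * p / 2 := by positivity
  have hF : scalarF w p = fun x => x + w * p / 2 * sgnPow p x := rfl
  have hcont : Continuous (scalarF w p) := by
    rw [hF]
    exact continuous_id.add (continuous_const.mul (sgnPow_continuous hp))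
  apply hcont.surjective
  · apply Filter.tendsto_atTop_mono' _ _ Filter.tendsto_id
    filter_upwards [Filter.eventually_ge_atTop (0:ℝ)] with x hx
    have : 0 ≤ w * p / 2 * sgnPow p x := by
      apply mul_nonneg hc
      rw [sgnPow_of_nonneg hp hx]
      exact Real.rpow_nonneg hx _
    show x ≤ x + w * p / 2 * sgnPow p x
    linarith [this]
  · apply Filter.tendsto_atBot_mono' _ _ Filter.tendsto_id
    filter_upwards [Filter.eventually_le_atBot (0:ℝ)] with x hx
    have : w * p / 2 * sgnPow p x ≤ 0 := by
      rcases eq_or_lt_of_le hx with h | h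
      · rw [h]
        simp [sgnPow, Real.zero_rpow (by linarith : p - 1 ≠ 0)]
      · rw [sgnPow_of_neg hp h]
        have : (0:ℝ) ≤ (-x) ^ (p - 1) := Real.rpow_nonneg (by linarith) _
        nlinarith
    show x + w * p / 2 * sgnPow p x ≤ x
    linarith [this]

end aux

/-- The scalar thresholding function satisfies `|S_{w,p}(x) − x| ≤ (wp/2)·|x|^(p−1)`. -/
theorem scalar_shrinkage_close_to_identity
    (p : ℝ) (hp1 : 1 ≤ p) (hp2 : p ≤ 2) (w : ℝ) (hw : 0 ≤ w) :
    ∀ x : ℝ, |scalarS w p x - x| ≤ w * p / 2 * |x| ^ (p - 1) := by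
  intro x
  by_cases hp : p = 1
  · subst hp
    rw [scalarS, if_pos rfl]
    rw [show (1:ℝ) - 1 = 0 by norm_num, Real.rpow_zero]
    split_ifs with h1 h2
    · rw [show x - w / 2 - x = -(w / 2) by ring, abs_neg, abs_of_nonneg (by linarith)]
      linarith
    · rw [show x + w / 2 - x = w / 2 by ring, abs_of_nonneg (by linarith)]
      linarith
    · have hx : |x| < w / 2 := abs_lt.mpr ⟨by linarith, by linarith⟩
      rw [zero_sub, abs_neg]
      linarith
  · have hp' : 1 < p := lt_of_le_of_ne hp1 (Ne.symm hp)
    have hc : (0:ℝ) ≤ w * p / 2 := by positivity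
    rw [scalarS, if_neg hp]
    set y := Function.invFun (scalarF w p) x with hy
    have hFy : scalarF w p y = x :=
      Function.invFun_eq (scalarF_surjective hp' hw x)
    have hxy : x - y = w * p / 2 * sgnPow p y := by
      rw [← hFy]; unfold scalarF sgnPow; ring
    have hyx : |y| ≤ |x| := by
      rcases le_or_gt 0 y with hy0 | hy0
      · have hg : 0 ≤ w * p / 2 * sgnPow p y := by
          apply mul_nonneg hc
          rw [sgnPow_of_nonneg hp' hy0]
          exact Real.rpow_nonneg hy0 _
        rw [abs_of_nonneg hy0, abs_of_nonneg (by linarith)]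
        linarith
      · have hg : w * p / 2 * sgnPow p y ≤ 0 := by
          rw [sgnPow_of_neg hp' hy0]
          have : (0:ℝ) ≤ (-y) ^ (p - 1) := Real.rpow_nonneg (by linarith) _
          nlinarith
        rw [abs_of_neg hy0, abs_of_neg (by linarith)]
        linarith
    calc |y - x| = |x - y| := abs_sub_comm _ _
      _ = w * p / 2 * |sgnPow p y| := by
          rw [hxy, abs_mul, abs_of_nonneg hc]
      _ ≤ w * p / 2 * |y| ^ (p - 1) :=
          mul_le_mul_of_nonneg_left (abs_sgnPow_le y) hc
      _ ≤ w * p / 2 * |x| ^ (p - 1) := by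
          apply mul_le_mul_of_nonneg_left _ hc
          exact Real.rpow_le_rpow (abs_nonneg y) hyx (by linarith)
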